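/- Let γ = γ_{0,...,0} ∈ Sp_{2kn}(F) be the block permutation matrix with μ_i = 0, ε_i = 1_n (from Lemma 5.1 with all r_i = 0), let η_0 be the block matrix diag(J'_{k}⊗1_n-type permutation) = [[antidiag(1_n,...,1_n), 0],[0, antidiag(1_n,...,1_n)]] of size 2kn (with k blocks of 1_n on each antidiagonal), and let η = [[0,1_n,0,0],[0,0,0,−1_{(k−1)n}],[1_{(k−1)n},0,0,0],[0,0,1_n,0]]. Then for every u_0 ∈ N(F) of the form (6) with superdiagonal data v_{1,2},...,v_{k−2,k−1}, y, there exists an upper-triangular unipotent u_0' ∈ Sp_{2kn}(F) (explicitly given, with blocks −y*, −v_{i,i+1}* above the diagonal in the first kn rows and v_{i,i+1}, y in the last kn rows) such that η_0 γ u_0 = u_0' η. -/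
import Mathlib


open Matrix

variable (F : Type*) [Field F]

/-- The `m × m` matrix with ones on the antidiagonal and zeros elsewhere. -/
def Jmat (m : ℕ) : Matrix (Fin m) (Fin m) F :=
  Matrix.of fun i j => if (i : ℕ) + (j : ℕ) + 1 = m then 1 else 0

/-- `x* = J_n xᵀ J_n`. -/
def matStar (n : ℕ) (x : Matrix (Fin n) (Fin n) F) : Matrix (Fin n) (Fin n) F :=
  Jmat F n * xᵀ * Jmat F n

/-- The `(i,j)` block (of size `n × n`) of a matrix indexed by `Fin (2k) × Fin n`. -/
def blk {k n : ℕ} (u : Matrix (Fin (2 * k) × Fin n) (Fin (2 * k) × Fin n) F)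
    (i j : Fin (2 * k)) : Matrix (Fin n) (Fin n) F :=
  Matrix.of fun r s => u (i, r) (j, s)

/-- The matrix of the symplectic form `[[0, J_{kn}], [−J_{kn}, 0]]` defining `Sp_{2kn}`,
in `n`-block coordinates. -/
def OmegaB (k n : ℕ) : Matrix (Fin (2 * k) × Fin n) (Fin (2 * k) × Fin n) F :=
  Matrix.of fun p q =>
    if (p.1 : ℕ) + (q.1 : ℕ) + 1 = 2 * k ∧ (p.2 : ℕ) + (q.2 : ℕ) + 1 = n then
      (if (p.1 : ℕ) < k then 1 else -1)
    else 0

/-- `Sp_{2kn}(F)` in `n`-block coordinates. -/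
def SpB (k n : ℕ) : Set (Matrix (Fin (2 * k) × Fin n) (Fin (2 * k) × Fin n) F) :=
  {g | IsUnit g ∧ gᵀ * OmegaB F k n * g = OmegaB F k n}

/-- The block matrix `η = [[0,1_n,0,0],[0,0,0,−1_{(k−1)n}],[1_{(k−1)n},0,0,0],[0,0,1_n,0]]`
(block rows of sizes `n, (k−1)n, (k−1)n, n`). -/
def etaMat (k n : ℕ) : Matrix (Fin (2 * k) × Fin n) (Fin (2 * k) × Fin n) F :=
  Matrix.of fun p q =>
    if p.2 = q.2 then
      (if (p.1 : ℕ) = 0 ∧ (q.1 : ℕ) + 1 = k then 1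
       else if 1 ≤ (p.1 : ℕ) ∧ (p.1 : ℕ) + 1 ≤ k ∧ (q.1 : ℕ) = k + (p.1 : ℕ) then -1
       else if k ≤ (p.1 : ℕ) ∧ (p.1 : ℕ) + 2 ≤ 2 * k ∧ (q.1 : ℕ) + k = (p.1 : ℕ) then 1
       else if (p.1 : ℕ) + 1 = 2 * k ∧ (q.1 : ℕ) = k then 1
       else 0)
    else 0

/-- `η₀ = diag(antidiag(1_n,…,1_n), antidiag(1_n,…,1_n))` (two antidiagonal blocks of `k`
copies of `1_n` each). -/
def eta0Mat (k n : ℕ) : Matrix (Fin (2 * k) × Fin n) (Fin (2 * k) × Fin n) F :=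
  Matrix.of fun p q =>
    if p.2 = q.2 ∧
        (((p.1 : ℕ) < k ∧ (q.1 : ℕ) < k ∧ (p.1 : ℕ) + (q.1 : ℕ) + 1 = k) ∨
          (k ≤ (p.1 : ℕ) ∧ k ≤ (q.1 : ℕ) ∧ (p.1 : ℕ) + (q.1 : ℕ) + 1 = 3 * k)) then
      1
    else 0

/-- `γ = γ_{0,…,0}`, the representative of Lemma 5.1 with all `rᵢ = 0`: it has `1_{2n}`
in the central diagonal blocks, `−1_n` at block positions `(k−1−t, k+t)`, and `1_n` at
block positions `(k+t, k−1−t)` for `1 ≤ t ≤ k−1`. -/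
def gammaMat (k n : ℕ) : Matrix (Fin (2 * k) × Fin n) (Fin (2 * k) × Fin n) F :=
  Matrix.of fun p q =>
    if p.2 = q.2 then
      (if p.1 = q.1 ∧ ((p.1 : ℕ) + 1 = k ∨ (p.1 : ℕ) = k) then 1
       else if (p.1 : ℕ) + (q.1 : ℕ) + 1 = 2 * k ∧ (p.1 : ℕ) + 2 ≤ k then -1
       else if (p.1 : ℕ) + (q.1 : ℕ) + 1 = 2 * k ∧ (q.1 : ℕ) + 2 ≤ k then 1
       else 0)
    else 0

/-- Membership in the unipotent subgroup `N` of Section 5 (displayed in equation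
(eq-unipotent-N)): a symplectic, block upper-triangular unipotent matrix whose blocks
satisfy the zero pattern and the compatibility relations of the display, with free data
`v_{1,2}, …, v_{k−2,k−1}` (the first `k−2` superdiagonal blocks) and
`y` (the block in position `(k−1, k+1)`, 1-indexed). -/
def InN (k n : ℕ) (u : Matrix (Fin (2 * k) × Fin n) (Fin (2 * k) × Fin n) F) : Prop :=
  u ∈ SpB F k n ∧
  (∀ i j : Fin (2 * k), (j : ℕ) < (i : ℕ) → blk F u i j = 0) ∧
  (∀ i : Fin (2 * k), blk F u i i = 1) ∧
  (∀ i j : Fin (2 * k), (i : ℕ) + 2 ≤ k →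
    ((j : ℕ) + 1 = k ∨ k + 1 ≤ (j : ℕ)) → blk F u i j = 0) ∧
  (∀ i j : Fin (2 * k), (i : ℕ) + 1 = k → (j : ℕ) = k → blk F u i j = 0) ∧
  (∀ i j : Fin (2 * k), (i : ℕ) = k → k + 1 ≤ (j : ℕ) → blk F u i j = 0) ∧
  (∀ i j i' j' : Fin (2 * k), (i : ℕ) + 1 = k → (j : ℕ) = k + 1 →
    (i' : ℕ) + 2 = k → (j' : ℕ) = k →
    blk F u i j = matStar F n (blk F u i' j')) ∧
  (∀ i j i' j' : Fin (2 * k), k + 1 ≤ (i : ℕ) → (i : ℕ) + 2 ≤ 2 * k →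
    (j : ℕ) = (i : ℕ) + 1 → (i : ℕ) + (i' : ℕ) + 2 = 2 * k → (j' : ℕ) = (i' : ℕ) + 1 →
    blk F u i j = -(matStar F n (blk F u i' j')))

/-! ### Auxiliary machinery: signed block-permutation matrices -/

def sigmaE (k p : ℕ) : ℕ :=
  if p = 0 then k - 1
  else if p + 1 ≤ k then k + p
  else if p + 2 ≤ 2 * k then p - k
  else k

def tauE (k p : ℕ) : ℕ :=
  if p + 1 = k then 0
  else if p = k then 2 * k - 1
  else if p + 1 ≤ k then p + k
  else p - k

def epsE (k p : ℕ) : F := if 1 ≤ p ∧ p + 1 ≤ k then -1 else 1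

def sigma0E (k p : ℕ) : ℕ := if p < k then k - 1 - p else 3 * k - 1 - p

def sigmaGE (k p : ℕ) : ℕ := if p + 1 = k ∨ p = k then p else 2 * k - 1 - p

def epsGE (k p : ℕ) : F := if p + 2 ≤ k then -1 else 1

def SPm (k n : ℕ) (f : ℕ → ℕ) (c : ℕ → F) :
    Matrix (Fin (2 * k) × Fin n) (Fin (2 * k) × Fin n) F :=
  Matrix.of fun p q => if p.2 = q.2 ∧ (q.1 : ℕ) = f (p.1 : ℕ) then c (p.1 : ℕ) else 0

lemma sigmaE_lt {k p : ℕ} (hk : 1 ≤ k) (hp : p < 2 * k) : sigmaE k p < 2 * k := by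
  unfold sigmaE; split_ifs <;> omega

lemma tauE_lt {k p : ℕ} (hk : 1 ≤ k) (hp : p < 2 * k) : tauE k p < 2 * k := by
  unfold tauE; split_ifs <;> omega

lemma tau_sigma {k p : ℕ} (hk : 1 ≤ k) (hp : p < 2 * k) : tauE k (sigmaE k p) = p := by
  unfold sigmaE tauE; split_ifs <;> omega

lemma sigma_tau {k p : ℕ} (hk : 1 ≤ k) (hp : p < 2 * k) : sigmaE k (tauE k p) = p := by
  unfold tauE sigmaE; split_ifs <;> omega

lemma epsE_sq (k p : ℕ) : epsE F k p * epsE F k p = 1 := by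
  unfold epsE; split_ifs <;> norm_num

lemma epsE_neg {k p : ℕ} (h1 : 1 ≤ p) (h2 : p + 1 ≤ k) : epsE F k p = -1 := by
  unfold epsE; rw [if_pos ⟨h1, h2⟩]

lemma epsE_one {k p : ℕ} (h : ¬(1 ≤ p ∧ p + 1 ≤ k)) : epsE F k p = 1 := by
  unfold epsE; rw [if_neg h]

lemma SPm_mul_apply (k n : ℕ) (f : ℕ → ℕ) (c : ℕ → F)
    (M : Matrix (Fin (2 * k) × Fin n) (Fin (2 * k) × Fin n) F)
    (p q : Fin (2 * k) × Fin n) (m : Fin (2 * k)) (hm : (m : ℕ) = f (p.1 : ℕ)) :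
    (SPm F k n f c * M) p q = c (p.1 : ℕ) * M (m, p.2) q := by
  rw [Matrix.mul_apply, Finset.sum_eq_single (m, p.2)]
  · simp [SPm, hm]
  · rintro ⟨b1, b2⟩ - hb
    simp only [SPm, Matrix.of_apply]
    rw [if_neg, zero_mul]
    rintro ⟨h1, h2⟩
    apply hb
    have e1 : b1 = m := Fin.ext (by rw [h2, hm])
    rw [e1, ← h1]
  · intro h; exact absurd (Finset.mem_univ _) h

lemma mul_SPm_apply (k n : ℕ) (g : ℕ → ℕ) (d : ℕ → F)
    (M : Matrix (Fin (2 * k) × Fin n) (Fin (2 * k) × Fin n) F)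
    (p q : Fin (2 * k) × Fin n) (m : Fin (2 * k)) (hgm : g (m : ℕ) = (q.1 : ℕ))
    (huni : ∀ m' : ℕ, m' < 2 * k → g m' = (q.1 : ℕ) → m' = (m : ℕ)) :
    (M * SPm F k n g d) p q = M p (m, q.2) * d (m : ℕ) := by
  rw [Matrix.mul_apply, Finset.sum_eq_single (m, q.2)]
  · simp [SPm, hgm]
  · rintro ⟨b1, b2⟩ - hb
    simp only [SPm, Matrix.of_apply]
    rw [if_neg, mul_zero]
    rintro ⟨h1, h2⟩
    apply hb
    have e1 : b1 = m := Fin.ext (huni _ b1.isLt h2.symm)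
    rw [e1, h1]
  · intro h; exact absurd (Finset.mem_univ _) h

lemma SPm_mul_SPm (k n : ℕ) (f g : ℕ → ℕ) (c d : ℕ → F)
    (hf : ∀ a, a < 2 * k → f a < 2 * k) :
    SPm F k n f c * SPm F k n g d
      = SPm F k n (fun a => g (f a)) (fun a => c a * d (f a)) := by
  ext p q
  rw [SPm_mul_apply F k n f c _ p q ⟨f p.1, hf _ p.1.isLt⟩ rfl]
  simp only [SPm, Matrix.of_apply]
  by_cases h : p.2 = q.2 ∧ (q.1 : ℕ) = g (f (p.1 : ℕ))
  · rw [if_pos h, if_pos h]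
  · rw [if_neg h, if_neg h, mul_zero]

lemma SPm_eq_one (k n : ℕ) (f : ℕ → ℕ) (c : ℕ → F)
    (h : ∀ a, a < 2 * k → f a = a ∧ c a = 1) : SPm F k n f c = 1 := by
  ext p q
  simp only [SPm, Matrix.of_apply, Matrix.one_apply]
  obtain ⟨h1, h2⟩ := h p.1 p.1.isLt
  rw [h1, h2]
  by_cases hpq : p = q
  · rw [if_pos ⟨congrArg Prod.snd hpq, congrArg (fun x => ((Prod.fst x : Fin (2*k)) : ℕ)) hpq.symm⟩, if_pos hpq]
  · rw [if_neg, if_neg hpq]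
    rintro ⟨h3, h4⟩
    exact hpq (Prod.ext (Fin.ext h4.symm) h3)
lemma eta_eq (k n : ℕ) (hk : 2 ≤ k) :
    etaMat F k n = SPm F k n (sigmaE k) (epsE F k) := by
  ext p q
  obtain ⟨p1, p2⟩ := p; obtain ⟨q1, q2⟩ := q
  have h1 := p1.isLt; have h2 := q1.isLt
  simp only [etaMat, SPm, Matrix.of_apply, sigmaE, epsE]
  by_cases h : p2 = q2
  · simp only [h, true_and, if_true]
    split_ifs <;> first | rfl | omega
  · simp only [h, false_and, if_false]

lemma eta0_eq (k n : ℕ) (hk : 2 ≤ k) :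
    eta0Mat F k n = SPm F k n (sigma0E k) (fun _ => (1 : F)) := by
  ext p q
  obtain ⟨p1, p2⟩ := p; obtain ⟨q1, q2⟩ := q
  have h1 := p1.isLt; have h2 := q1.isLt
  simp only [eta0Mat, SPm, Matrix.of_apply, sigma0E]
  by_cases h : p2 = q2
  · simp only [h, true_and, if_true]
    split_ifs <;> first | rfl | omega
  · simp only [h, false_and, if_false]

lemma gamma_eq (k n : ℕ) (hk : 2 ≤ k) :
    gammaMat F k n = SPm F k n (sigmaGE k) (epsGE F k) := by
  ext p q
  obtain ⟨p1, p2⟩ := p; obtain ⟨q1, q2⟩ := q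
  have h1 := p1.isLt; have h2 := q1.isLt
  by_cases h : p2 = q2
  · simp only [gammaMat, SPm, Matrix.of_apply, sigmaGE, epsGE, Fin.ext_iff, h, true_and, if_true]
    split_ifs <;> first | rfl | omega
  · simp only [gammaMat, SPm, Matrix.of_apply, h, false_and, if_false]

lemma eta0_mul_gamma (k n : ℕ) (hk : 2 ≤ k) :
    eta0Mat F k n * gammaMat F k n = SPm F k n (sigmaE k) (epsE F k) := by
  rw [eta0_eq F k n hk, gamma_eq F k n hk,
    SPm_mul_SPm F k n _ _ _ _ (fun a ha => by unfold sigma0E; split_ifs <;> omega)]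
  ext p q
  simp only [SPm, Matrix.of_apply]
  have h1 := p.1.isLt
  have e1 : sigmaGE k (sigma0E k (p.1 : ℕ)) = sigmaE k (p.1 : ℕ) := by
    unfold sigma0E sigmaGE sigmaE; split_ifs <;> omega
  have e2 : (1 : F) * epsGE F k (sigma0E k (p.1 : ℕ)) = epsE F k (p.1 : ℕ) := by
    rw [one_mul]; unfold sigma0E epsGE epsE; split_ifs <;> first | rfl | omega
  rw [e1, e2]
lemma eta_transpose (k n : ℕ) (hk : 1 ≤ k) :
    (SPm F k n (sigmaE k) (epsE F k))ᵀ
      = SPm F k n (tauE k) (fun a => epsE F k (tauE k a)) := by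
  ext p q
  obtain ⟨p1, p2⟩ := p; obtain ⟨q1, q2⟩ := q
  simp only [Matrix.transpose_apply, SPm, Matrix.of_apply]
  by_cases h : (q1 : ℕ) = tauE k (p1 : ℕ)
  · rw [h, sigma_tau hk p1.isLt]
    by_cases h2 : q2 = p2
    · rw [if_pos ⟨h2, rfl⟩, if_pos ⟨h2.symm, rfl⟩]
    · rw [if_neg (fun hc => h2 hc.1), if_neg (fun hc => h2 (hc.1.symm))]
  · have h' : ¬ ((p1 : ℕ) = sigmaE k (q1 : ℕ)) := fun hc => h (by rw [hc, tau_sigma hk q1.isLt])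
    rw [if_neg (fun hc => h' hc.2), if_neg (fun hc => h hc.2)]

set_option maxHeartbeats 1000000 in
lemma eta_symp (k n : ℕ) (hk : 2 ≤ k) :
    (SPm F k n (sigmaE k) (epsE F k))ᵀ * OmegaB F k n * SPm F k n (sigmaE k) (epsE F k)
      = OmegaB F k n := by
  have hk1 : 1 ≤ k := by omega
  rw [eta_transpose F k n hk1]
  ext P Q
  obtain ⟨p, r⟩ := P; obtain ⟨q, s⟩ := Q
  rw [mul_SPm_apply F k n (sigmaE k) (epsE F k) _ (p, r) (q, s)
      ⟨tauE k (q : ℕ), tauE_lt hk1 q.isLt⟩ (sigma_tau hk1 q.isLt)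
      (fun m' hm' hc => by have h5 := tau_sigma (p := m') hk1 hm'; rw [hc] at h5; exact h5.symm)]
  rw [SPm_mul_apply F k n (tauE k) _ _ (p, r) _ ⟨tauE k (p : ℕ), tauE_lt hk1 p.isLt⟩ rfl]
  simp only [OmegaB, Matrix.of_apply]
  have hp := p.isLt; have hq := q.isLt
  unfold tauE epsE
  split_ifs <;> first | omega | norm_num
lemma master (k n : ℕ) (hk : 2 ≤ k)
    (M : Matrix (Fin (2 * k) × Fin n) (Fin (2 * k) × Fin n) F)
    (i j i' j' : Fin (2 * k)) (hi' : (i' : ℕ) = sigmaE k (i : ℕ))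
    (hj' : (j' : ℕ) = sigmaE k (j : ℕ)) :
    blk F (SPm F k n (sigmaE k) (epsE F k) * M
        * SPm F k n (tauE k) (fun a => epsE F k (tauE k a))) i j
      = (epsE F k (i : ℕ) * epsE F k (j : ℕ)) • blk F M i' j' := by
  have hk1 : 1 ≤ k := by omega
  ext r s
  simp only [blk, Matrix.of_apply, Matrix.smul_apply, smul_eq_mul]
  rw [mul_SPm_apply F k n (tauE k) _ _ (i, r) (j, s) j'
      (by rw [hj']; exact tau_sigma hk1 j.isLt)
      (fun m' hm' hc => by have h5 := sigma_tau (p := m') hk1 hm'; rw [hc] at h5; exact h5.symm.trans hj'.symm)]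
  rw [SPm_mul_apply F k n (sigmaE k) _ _ (i, r) _ i' hi']
  rw [hj', tau_sigma hk1 j.isLt]
  ring
lemma lower_cases {k i j : ℕ} (hk : 2 ≤ k) (hi : i < 2 * k) (hj : j < 2 * k) (hij : j < i) :
    sigmaE k j < sigmaE k i ∨
    (sigmaE k i + 2 ≤ k ∧ (sigmaE k j + 1 = k ∨ k + 1 ≤ sigmaE k j)) ∨
    (sigmaE k i = k ∧ k + 1 ≤ sigmaE k j) := by
  unfold sigmaE; split_ifs <;> omega

lemma conj_symp (k n : ℕ) (A Ai U : Matrix (Fin (2 * k) × Fin n) (Fin (2 * k) × Fin n) F)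
    (hA : Aᵀ * OmegaB F k n * A = OmegaB F k n) (hAAi : A * Ai = 1)
    (hU : Uᵀ * OmegaB F k n * U = OmegaB F k n) :
    (A * U * Ai)ᵀ * OmegaB F k n * (A * U * Ai) = OmegaB F k n := by
  have hAi : Aiᵀ * OmegaB F k n * Ai = OmegaB F k n := by
    conv_lhs => rw [← hA]
    have e : Aiᵀ * (Aᵀ * OmegaB F k n * A) * Ai
        = (A * Ai)ᵀ * OmegaB F k n * (A * Ai) := by
      rw [Matrix.transpose_mul]; simp only [Matrix.mul_assoc]
    rw [e, hAAi, Matrix.transpose_one, Matrix.one_mul, Matrix.mul_one]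
  calc (A * U * Ai)ᵀ * OmegaB F k n * (A * U * Ai)
      = Aiᵀ * (Uᵀ * (Aᵀ * OmegaB F k n * A) * U) * Ai := by
        rw [Matrix.transpose_mul, Matrix.transpose_mul]; simp only [Matrix.mul_assoc]
    _ = Aiᵀ * (Uᵀ * OmegaB F k n * U) * Ai := by rw [hA]
    _ = Aiᵀ * OmegaB F k n * Ai := by rw [hU]
    _ = OmegaB F k n := hAi
set_option maxHeartbeats 1000000 in
/-- For every `u₀ ∈ N(F)` there exists an upper-triangular unipotent `u₀' ∈ Sp_{2kn}(F)`,
explicitly given — with superdiagonal blocks `−y*, −v_{k−2,k−1}*, …, −v_{1,2}*, 0` in the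
first `kn` rows and `v_{1,2}, …, v_{k−2,k−1}, y` in the last `kn` rows — such that
`η₀ γ u₀ = u₀' η`. -/
theorem stmt18 (k n : ℕ) (hk : 2 ≤ k) (hn : 0 < n)
    (u0 : Matrix (Fin (2 * k) × Fin n) (Fin (2 * k) × Fin n) F)
    (hu0 : InN F k n u0) :
    ∃ u0' : Matrix (Fin (2 * k) × Fin n) (Fin (2 * k) × Fin n) F,
      (∀ i j : Fin (2 * k), (j : ℕ) < (i : ℕ) → blk F u0' i j = 0) ∧
      (∀ i : Fin (2 * k), blk F u0' i i = 1) ∧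
      u0' ∈ SpB F k n ∧
      (∀ i j i' j' : Fin (2 * k), (i : ℕ) = 0 → (j : ℕ) = 1 →
        (i' : ℕ) + 2 = k → (j' : ℕ) = k →
        blk F u0' i j = -(matStar F n (blk F u0 i' j'))) ∧
      (∀ i j i' j' : Fin (2 * k), 1 ≤ (i : ℕ) → (i : ℕ) + 2 ≤ k →
        (j : ℕ) = (i : ℕ) + 1 → (i : ℕ) + (i' : ℕ) + 2 = k → (j' : ℕ) = (i' : ℕ) + 1 →
        blk F u0' i j = -(matStar F n (blk F u0 i' j'))) ∧
      (∀ i j : Fin (2 * k), (i : ℕ) + 1 = k → (j : ℕ) = k → blk F u0' i j = 0) ∧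
      (∀ i j i' j' : Fin (2 * k), k ≤ (i : ℕ) → (i : ℕ) + 3 ≤ 2 * k →
        (j : ℕ) = (i : ℕ) + 1 → (i' : ℕ) + k = (i : ℕ) → (j' : ℕ) = (i' : ℕ) + 1 →
        blk F u0' i j = blk F u0 i' j') ∧
      (∀ i j i' j' : Fin (2 * k), (i : ℕ) + 2 = 2 * k → (j : ℕ) + 1 = 2 * k →
        (i' : ℕ) + 2 = k → (j' : ℕ) = k →
        blk F u0' i j = blk F u0 i' j') ∧
      eta0Mat F k n * gammaMat F k n * u0 = u0' * etaMat F k n := by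
  have hk1 : 1 ≤ k := by omega
  obtain ⟨hsp, hlow, hdiag, hz4, hz5, hz6, hst7, hst8⟩ := hu0
  obtain ⟨hu, hsymp⟩ := hsp
  have hηηi : SPm F k n (sigmaE k) (epsE F k)
      * SPm F k n (tauE k) (fun a => epsE F k (tauE k a)) = 1 := by
    rw [SPm_mul_SPm F k n _ _ _ _ (fun a ha => sigmaE_lt hk1 ha)]
    exact SPm_eq_one F k n _ _ (fun a ha =>
      ⟨tau_sigma hk1 ha, by rw [tau_sigma hk1 ha]; exact epsE_sq F k a⟩)
  have hηiη : SPm F k n (tauE k) (fun a => epsE F k (tauE k a))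
      * SPm F k n (sigmaE k) (epsE F k) = 1 := by
    rw [SPm_mul_SPm F k n _ _ _ _ (fun a ha => tauE_lt hk1 ha)]
    exact SPm_eq_one F k n _ _ (fun a ha => ⟨sigma_tau hk1 ha, epsE_sq F k (tauE k a)⟩)
  refine ⟨SPm F k n (sigmaE k) (epsE F k) * u0
      * SPm F k n (tauE k) (fun a => epsE F k (tauE k a)),
    ?_, ?_, ?_, ?_, ?_, ?_, ?_, ?_, ?_⟩
  · -- lower triangular
    intro i j hij
    rw [master F k n hk u0 i j ⟨sigmaE k (i : ℕ), sigmaE_lt hk1 i.isLt⟩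
      ⟨sigmaE k (j : ℕ), sigmaE_lt hk1 j.isLt⟩ rfl rfl]
    rcases lower_cases hk i.isLt j.isLt hij with hc | ⟨hc1, hc2⟩ | ⟨hc1, hc2⟩
    · rw [hlow _ _ hc, smul_zero]
    · rw [hz4 _ _ hc1 hc2, smul_zero]
    · rw [hz6 _ _ hc1 hc2, smul_zero]
  · -- diagonal
    intro i
    rw [master F k n hk u0 i i ⟨sigmaE k (i : ℕ), sigmaE_lt hk1 i.isLt⟩
      ⟨sigmaE k (i : ℕ), sigmaE_lt hk1 i.isLt⟩ rfl rfl, hdiag, epsE_sq, one_smul]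
  · -- symplectic
    refine ⟨?_, ?_⟩
    · exact ((⟨_, _, hηηi, hηiη⟩ : Units _).isUnit.mul hu).mul
        (⟨_, _, hηiη, hηηi⟩ : Units _).isUnit
    · exact conj_symp F k n _ _ u0 (eta_symp F k n hk) hηηi hsymp
  · -- block (0,1)
    intro i j i' j' h1 h2 h3 h4
    rw [master F k n hk u0 i j ⟨k - 1, by omega⟩ ⟨k + 1, by omega⟩
      (show k - 1 = sigmaE k (i : ℕ) by unfold sigmaE; split_ifs <;> omega)
      (show k + 1 = sigmaE k (j : ℕ) by unfold sigmaE; split_ifs <;> omega)]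
    rw [hst7 ⟨k - 1, by omega⟩ ⟨k + 1, by omega⟩ i' j' (show k - 1 + 1 = k by omega) rfl h3 h4]
    rw [epsE_one F (by omega), epsE_neg F (by omega) (by omega), one_mul, neg_one_smul]
  · -- blocks (i, i+1), 1 ≤ i ≤ k-2
    intro i j i' j' h1 h2 h3 h4 h5
    rw [master F k n hk u0 i j ⟨k + (i : ℕ), by omega⟩ ⟨k + (i : ℕ) + 1, by omega⟩
      (show k + (i : ℕ) = sigmaE k (i : ℕ) by unfold sigmaE; split_ifs <;> omega)
      (show k + (i : ℕ) + 1 = sigmaE k (j : ℕ) by unfold sigmaE; split_ifs <;> omega)]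
    rw [hst8 ⟨k + (i : ℕ), by omega⟩ ⟨k + (i : ℕ) + 1, by omega⟩ i' j'
      (show k + 1 ≤ k + (i : ℕ) by omega) (show k + (i : ℕ) + 2 ≤ 2 * k by omega)
      rfl (show k + (i : ℕ) + (i' : ℕ) + 2 = 2 * k by omega) h5]
    rw [epsE_neg F (by omega) (by omega), epsE_neg F (by omega) (by omega)]
    rw [show ((-1 : F) * -1) = 1 by norm_num, one_smul]
  · -- block (k-1, k)
    intro i j h1 h2
    rw [master F k n hk u0 i j ⟨2 * k - 1, by omega⟩ ⟨0, by omega⟩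
      (show 2 * k - 1 = sigmaE k (i : ℕ) by unfold sigmaE; split_ifs <;> omega)
      (show 0 = sigmaE k (j : ℕ) by unfold sigmaE; split_ifs <;> omega)]
    rw [hlow _ _ (show (0 : ℕ) < 2 * k - 1 by omega), smul_zero]
  · -- blocks (i, i+1), k ≤ i ≤ 2k-3
    intro i j i' j' h1 h2 h3 h4 h5
    rw [master F k n hk u0 i j i' j'
      (show (i' : ℕ) = sigmaE k (i : ℕ) by unfold sigmaE; split_ifs <;> omega)
      (show (j' : ℕ) = sigmaE k (j : ℕ) by unfold sigmaE; split_ifs <;> omega),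
      epsE_one F (by omega), epsE_one F (by omega), one_mul, one_smul]
  · -- block (2k-2, 2k-1)
    intro i j i' j' h1 h2 h3 h4
    rw [master F k n hk u0 i j i' j'
      (show (i' : ℕ) = sigmaE k (i : ℕ) by unfold sigmaE; split_ifs <;> omega)
      (show (j' : ℕ) = sigmaE k (j : ℕ) by unfold sigmaE; split_ifs <;> omega),
      epsE_one F (by omega), epsE_one F (by omega), one_mul, one_smul]
  · -- the matrix identity
    rw [eta0_mul_gamma F k n hk, eta_eq F k n hk,
      Matrix.mul_assoc (SPm F k n (sigmaE k) (epsE F k) * u0), hηiη, Matrix.mul_one]
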